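/- For every w > 0, the following are equivalent: (i) w satisfies all energy and data constraints, i.e., for every u with 0 ≤ u ≤ m−1, ∑_{l=1}^{u+1} s·max(w − 1/γ_l, 0) ≤ E_u, and for every v with 0 ≤ v ≤ m−1, ∑_{l=1}^{v+1} s·W·log₂(1 + max(w − 1/γ_l, 0)·γ_l) ≤ D_v; (ii) w ≤ F(w). -/

import Mathlib

open Finset

/-- Energy water-level bound `w^e(w)`. -/
noncomputable def wEnergy (m : ℕ) (γ : ℕ → ℝ) (s : ℝ) (E : ℕ → ℝ) (w : ℝ) : ℝ :=
  ⨅ u : Fin m,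
    (E u + s * ∑ l ∈ Finset.Icc 1 ((u : ℕ) + 1), min (1 / γ l) w) /
      (s * ((u : ℕ) + 1))

/-- Data water-level bound `w^b(w)`. -/
noncomputable def wData (m : ℕ) (γ : ℕ → ℝ) (s W : ℝ) (D : ℕ → ℝ) (w : ℝ) : ℝ :=
  (2 : ℝ) ^
    (⨅ v : Fin m,
      (D v + s * W * ∑ l ∈ Finset.Icc 1 ((v : ℕ) + 1),
          Real.logb 2 (min (1 / γ l) w)) /
        (s * W * ((v : ℕ) + 1)))

/-- The iteration map `F(w) = min(w^e(w), w^b(w))`. -/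
noncomputable def Fmap (m : ℕ) (γ : ℕ → ℝ) (s W : ℝ) (E D : ℕ → ℝ) (w : ℝ) : ℝ :=
  min (wEnergy m γ s E w) (wData m γ s W D w)

lemma energy_iff (u : ℕ) (γ : ℕ → ℝ) (hγ : ∀ l ∈ Finset.Icc 1 (u+1), 0 < γ l)
    (s : ℝ) (hs : 0 < s) (Eu w : ℝ) :
    (∑ l ∈ Finset.Icc 1 (u + 1), s * max (w - 1 / γ l) 0 ≤ Eu) ↔
      w ≤ (Eu + s * ∑ l ∈ Finset.Icc 1 (u + 1), min (1 / γ l) w) / (s * ((u:ℝ) + 1)) := by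
  have hpos : (0:ℝ) < s * ((u:ℝ) + 1) := by positivity
  rw [le_div_iff₀ hpos]
  have key : ∀ l ∈ Finset.Icc 1 (u+1),
      s * max (w - 1 / γ l) 0 = s * w - s * min (1 / γ l) w := by
    intro l hl
    rcases le_total (1 / γ l) w with h | h
    · rw [min_eq_left h, max_eq_left (by linarith)]; ring
    · rw [min_eq_right h, max_eq_right (by linarith)]; ring
  rw [Finset.sum_congr rfl key, Finset.sum_sub_distrib, Finset.sum_const,
    Nat.card_Icc, ← Finset.mul_sum]
  simp only [Nat.add_sub_cancel, nsmul_eq_mul]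
  push_cast
  constructor <;> intro h <;> linarith

lemma data_iff (v : ℕ) (γ : ℕ → ℝ) (hγ : ∀ l ∈ Finset.Icc 1 (v+1), 0 < γ l)
    (s W : ℝ) (hs : 0 < s) (hW : 0 < W) (Dv w : ℝ) (hw : 0 < w) :
    (∑ l ∈ Finset.Icc 1 (v + 1),
        s * W * Real.logb 2 (1 + max (w - 1 / γ l) 0 * γ l) ≤ Dv) ↔
      Real.logb 2 w ≤
        (Dv + s * W * ∑ l ∈ Finset.Icc 1 (v + 1), Real.logb 2 (min (1 / γ l) w)) /
          (s * W * ((v:ℝ) + 1)) := by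
  have hpos : (0:ℝ) < s * W * ((v:ℝ) + 1) := by positivity
  rw [le_div_iff₀ hpos]
  have key : ∀ l ∈ Finset.Icc 1 (v+1),
      s * W * Real.logb 2 (1 + max (w - 1 / γ l) 0 * γ l)
        = s * W * Real.logb 2 w - s * W * Real.logb 2 (min (1 / γ l) w) := by
    intro l hl
    have hγl := hγ l hl
    rcases le_total (1 / γ l) w with h | h
    · rw [min_eq_left h, max_eq_left (by linarith)]
      have h1 : 1 + (w - 1 / γ l) * γ l = w * γ l := by field_simp; ring
      rw [h1, Real.logb_mul hw.ne' hγl.ne', one_div, Real.logb_inv]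
      ring
    · rw [min_eq_right h, max_eq_right (by linarith)]
      simp
  rw [Finset.sum_congr rfl key, Finset.sum_sub_distrib, Finset.sum_const,
    Nat.card_Icc, ← Finset.mul_sum]
  simp only [Nat.add_sub_cancel, nsmul_eq_mul]
  push_cast
  constructor <;> intro h <;> linarith

/-- For w > 0, satisfying all cumulative energy and data constraints
is equivalent to `w ≤ F(w)`. -/
theorem stmt_9 (m : ℕ) (hm : 1 ≤ m) (γ : ℕ → ℝ)
    (hγ : ∀ l, 1 ≤ l → l ≤ m → 0 < γ l) (s W : ℝ) (hs : 0 < s) (hW : 0 < W)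
    (E D : ℕ → ℝ) (hE : ∀ u, u ≤ m - 1 → 0 ≤ E u) (hD : ∀ v, v ≤ m - 1 → 0 ≤ D v)
    (w : ℝ) (hw : 0 < w) :
    ((∀ u, u ≤ m - 1 →
        ∑ l ∈ Finset.Icc 1 (u + 1), s * max (w - 1 / γ l) 0 ≤ E u) ∧
     (∀ v, v ≤ m - 1 →
        ∑ l ∈ Finset.Icc 1 (v + 1),
            s * W * Real.logb 2 (1 + max (w - 1 / γ l) 0 * γ l) ≤ D v)) ↔
      w ≤ Fmap m γ s W E D w := by
  have hne : Nonempty (Fin m) := ⟨⟨0, hm⟩⟩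
  have hidx : ∀ u : ℕ, (u ≤ m - 1 ↔ u < m) := fun u => by omega
  have hγ' : ∀ u : ℕ, u < m → ∀ l ∈ Finset.Icc 1 (u+1), 0 < γ l := by
    intro u hu l hl
    simp only [Finset.mem_Icc] at hl
    exact hγ l hl.1 (by omega)
  rw [Fmap, le_min_iff, wEnergy, wData]
  have hE' : w ≤ (⨅ u : Fin m,
      (E u + s * ∑ l ∈ Finset.Icc 1 ((u : ℕ) + 1), min (1 / γ l) w) /
        (s * ((u : ℕ) + 1))) ↔
      ∀ u : Fin m, w ≤ (E u + s * ∑ l ∈ Finset.Icc 1 ((u : ℕ) + 1), min (1 / γ l) w) /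
        (s * ((u : ℕ) + 1)) :=
    le_ciInf_iff (Set.finite_range _).bddBelow
  have hD' : Real.logb 2 w ≤ (⨅ v : Fin m,
      (D v + s * W * ∑ l ∈ Finset.Icc 1 ((v : ℕ) + 1), Real.logb 2 (min (1 / γ l) w)) /
        (s * W * ((v : ℕ) + 1))) ↔
      ∀ v : Fin m, Real.logb 2 w ≤
        (D v + s * W * ∑ l ∈ Finset.Icc 1 ((v : ℕ) + 1), Real.logb 2 (min (1 / γ l) w)) /
          (s * W * ((v : ℕ) + 1)) :=
    le_ciInf_iff (Set.finite_range _).bddBelow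
  have hrpow : ∀ x : ℝ, w ≤ (2:ℝ) ^ x ↔ Real.logb 2 w ≤ x := by
    intro x
    rw [show w = (2:ℝ) ^ Real.logb 2 w from
      (Real.rpow_logb (by norm_num) (by norm_num) hw).symm]
    rw [Real.rpow_le_rpow_left_iff (by norm_num : (1:ℝ) < 2),
      Real.rpow_logb (by norm_num) (by norm_num) hw]
  rw [hrpow, hE', hD']
  constructor
  · rintro ⟨h1, h2⟩
    refine ⟨fun u => ?_, fun v => ?_⟩
    · exact (energy_iff u γ (hγ' u u.2) s hs (E u) w).1 (h1 u ((hidx u).2 u.2))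
    · exact (data_iff v γ (hγ' v v.2) s W hs hW (D v) w hw).1 (h2 v ((hidx v).2 v.2))
  · rintro ⟨h1, h2⟩
    refine ⟨fun u hu => ?_, fun v hv => ?_⟩
    · have hu' := (hidx u).1 hu
      exact (energy_iff u γ (hγ' u hu') s hs (E u) w).2 (h1 ⟨u, hu'⟩)
    · have hv' := (hidx v).1 hv
      exact (data_iff v γ (hγ' v hv') s W hs hW (D v) w hw).2 (h2 ⟨v, hv'⟩)
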